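/- Let n, k ∈ ℕ with k < n, let H ⊆ ℝ with |H| ≥ n+1, let ω = (ω₁, …, ω_n) : H → ℝⁿ be an n-dimensional positive Chebyshev system over H such that ω_{⟨k⟩} and ω_{⟨k+1⟩} are k- and (k+1)-dimensional positive Chebyshev systems over H, and let f : H → ℝ. Then for all pairwise distinct x₁, …, x_{n+1} ∈ H the following identity holds: Φ_{(ω,f)}(x₁, …, x_{n+1}) · (Φ_{ω_{⟨k⟩}}(x₁, …, x_k))^{n−k} / ∏_{j=k+1}^{n+1} Φ_{ω_{⟨k+1⟩}}(x₁, …, x_k, x_j) equals the determinant of the (n−k+1)×(n−k+1) matrix whose columns are indexed by j ∈ {k+1, …, n+1}, whose first n−k rows have entries [x₁, …, x_k, x_j; ω_i]_{ω_{⟨k+1⟩}} for i ∈ {k+1, …, n}, and whose last row has entries [x₁, …, x_k, x_j; f]_{ω_{⟨k+1⟩}}. -/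

import Mathlib

/-- `Φ_ω(x₁,…,x_m) = det(ω_i(x_j))`. -/
noncomputable def Phi {m : ℕ} (ω : Fin m → ℝ → ℝ) (x : Fin m → ℝ) : ℝ :=
  Matrix.det (Matrix.of fun i j => ω i (x j))

/-- `ω` is an `m`-dimensional positive Chebyshev system over `H`. -/
def IsPosChebyshev {m : ℕ} (ω : Fin m → ℝ → ℝ) (H : Set ℝ) : Prop :=
  ∀ x : Fin m → ℝ, (∀ i, x i ∈ H) → StrictMono x → 0 < Phi ω x

/-- `f` is convex with respect to the `m`-dimensional system `ω` on `S`. -/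
def IsConvexWRT {m : ℕ} (ω : Fin m → ℝ → ℝ) (S : Set ℝ) (f : ℝ → ℝ) : Prop :=
  ∀ x : Fin (m + 1) → ℝ, (∀ i, x i ∈ S) → StrictMono x → 0 ≤ Phi (Fin.snoc ω f) x

/-- The generalized divided difference `[x₁,…,x_k; f]_{ω⟨k⟩}`:
the numerator replaces the last function `ω_k` by `f`. -/
noncomputable def divDiff {k : ℕ} (ω : Fin k → ℝ → ℝ) (f : ℝ → ℝ) (x : Fin k → ℝ) : ℝ :=
  Phi (fun i => if (i : ℕ) + 1 = k then f else ω i) x / Phi ω x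

lemma phi_ne_zero {m : ℕ} {ω : Fin m → ℝ → ℝ} {H : Set ℝ}
    (hω : IsPosChebyshev ω H) (x : Fin m → ℝ) (hx : ∀ i, x i ∈ H)
    (hinj : Function.Injective x) : Phi ω x ≠ 0 := by
  intro h0
  set σ := Tuple.sort x with hσ
  have hmono : StrictMono (x ∘ σ) :=
    (Tuple.monotone_sort x).strictMono_of_injective (hinj.comp σ.injective)
  have hpos := hω (x ∘ σ) (fun i => hx _) hmono
  have he : Phi ω (x ∘ σ) = (Equiv.Perm.sign σ : ℤ) * Phi ω x := by
    simpa [Phi, Matrix.submatrix] using Matrix.det_permute' σ (Matrix.of fun i j => ω i (x j))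
  rw [he, h0, mul_zero] at hpos
  exact lt_irrefl 0 hpos

lemma sylvester {k m : ℕ} (A : Matrix (Fin k) (Fin k) ℝ) (B : Matrix (Fin k) (Fin m) ℝ)
    (C : Matrix (Fin m) (Fin k) ℝ) (D : Matrix (Fin m) (Fin m) ℝ) (hA : A.det ≠ 0) :
    A.det * (Matrix.det (Matrix.of fun i j : Fin m =>
        (Matrix.fromBlocks A (Matrix.of fun r (_ : Fin 1) => B r j)
          (Matrix.of fun (_ : Fin 1) c => C i c)
          (Matrix.of fun (_ : Fin 1) (_ : Fin 1) => D i j)).det))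
      = A.det ^ m * (Matrix.fromBlocks A B C D).det := by
  haveI : Invertible A := A.invertibleOfIsUnitDet (isUnit_iff_ne_zero.2 hA)
  have hentry : ∀ i j, (Matrix.fromBlocks A (Matrix.of fun r (_ : Fin 1) => B r j)
          (Matrix.of fun (_ : Fin 1) c => C i c)
          (Matrix.of fun (_ : Fin 1) (_ : Fin 1) => D i j)).det
        = A.det * (D - C * ⅟A * B) i j := by
    intro i j
    rw [Matrix.det_fromBlocks₁₁]
    congr 1
    rw [Matrix.det_fin_one]
    simp [Matrix.mul_apply, Matrix.sub_apply, Finset.sum_mul]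
  have hmat : (Matrix.of fun i j : Fin m =>
        (Matrix.fromBlocks A (Matrix.of fun r (_ : Fin 1) => B r j)
          (Matrix.of fun (_ : Fin 1) c => C i c)
          (Matrix.of fun (_ : Fin 1) (_ : Fin 1) => D i j)).det)
      = A.det • (D - C * ⅟A * B) := by
    ext i j
    simp [hentry i j]
  rw [hmat, Matrix.det_smul, Matrix.det_fromBlocks₁₁]
  simp [Fintype.card_fin]
  ring

lemma det_fin_add (k m : ℕ) (M : Matrix (Fin (k + m)) (Fin (k + m)) ℝ) :
    M.det = (Matrix.fromBlocks
     (Matrix.of fun i j : Fin k => M (Fin.castAdd m i) (Fin.castAdd m j))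
     (Matrix.of fun (i : Fin k) (j : Fin m) => M (Fin.castAdd m i) (Fin.natAdd k j))
     (Matrix.of fun (i : Fin m) (j : Fin k) => M (Fin.natAdd k i) (Fin.castAdd m j))
     (Matrix.of fun i j : Fin m => M (Fin.natAdd k i) (Fin.natAdd k j))).det := by
  rw [← Matrix.det_submatrix_equiv_self finSumFinEquiv M]
  congr 1
  ext i j
  cases i <;> cases j <;> rfl

/-- The identity \eqref{fid}:
`Φ_{(ω,f)}(x₁,…,x_{n+1}) · (Φ_{ω⟨k⟩}(x₁,…,x_k))^{n-k} / ∏_{j=k+1}^{n+1} Φ_{ω⟨k+1⟩}(x₁,…,x_k,x_j)`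
equals the determinant of the `(n-k+1) × (n-k+1)` matrix whose first `n-k` rows have entries
`[x₁,…,x_k,x_j; ω_i]_{ω⟨k+1⟩}` (`i ∈ {k+1,…,n}`) and whose last row has entries
`[x₁,…,x_k,x_j; f]_{ω⟨k+1⟩}` (`j ∈ {k+1,…,n+1}`). -/
theorem fundamental_divided_difference_identity (n k : ℕ) (hk : k < n) (H : Set ℝ)
    (hH : n + 1 ≤ H.ncard ∨ H.Infinite)
    (ω : Fin n → ℝ → ℝ) (f : ℝ → ℝ)
    (hω : IsPosChebyshev ω H)
    (hωk : IsPosChebyshev (fun i : Fin k => ω (Fin.castLE (by omega) i)) H)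
    (hωk1 : IsPosChebyshev (fun i : Fin (k + 1) => ω (Fin.castLE hk i)) H)
    (x : Fin (n + 1) → ℝ) (hxH : ∀ i, x i ∈ H) (hinj : Function.Injective x) :
    Phi (Fin.snoc ω f) x *
        (Phi (fun i : Fin k => ω (Fin.castLE (by omega) i))
          (fun i : Fin k => x (Fin.castLE (by omega) i))) ^ (n - k) /
      ∏ j : Fin (n - k + 1),
        Phi (fun i : Fin (k + 1) => ω (Fin.castLE hk i))
          (Fin.snoc (fun i : Fin k => x (Fin.castLE (by omega) i))
            (x ⟨k + (j : ℕ), by have := j.isLt; omega⟩))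
    = Matrix.det (Matrix.of fun i j : Fin (n - k + 1) =>
        if h : (i : ℕ) < n - k then
          divDiff (fun t : Fin (k + 1) => ω (Fin.castLE hk t))
            (ω ⟨k + (i : ℕ), by omega⟩)
            (Fin.snoc (fun t : Fin k => x (Fin.castLE (by omega) t))
              (x ⟨k + (j : ℕ), by have := j.isLt; omega⟩))
        else
          divDiff (fun t : Fin (k + 1) => ω (Fin.castLE hk t)) f
            (Fin.snoc (fun t : Fin k => x (Fin.castLE (by omega) t))
              (x ⟨k + (j : ℕ), by have := j.isLt; omega⟩))) := by
  have hkm : n + 1 = k + (n - k + 1) := by omega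
  set g : Fin (n - k + 1) → ℝ → ℝ := fun i =>
    if h : (i : ℕ) < n - k then ω ⟨k + (i : ℕ), by omega⟩ else f with hg
  set xs : Fin k → ℝ := fun t => x (Fin.castLE (by omega) t) with hxs
  set y : Fin (n - k + 1) → ℝ := fun j => x ⟨k + (j : ℕ), by omega⟩ with hy
  have hyj : ∀ j : Fin (n - k + 1), x ⟨k + (j : ℕ), by omega⟩ = y j := fun _ => rfl
  simp only [hyj]
  set A : Matrix (Fin k) (Fin k) ℝ :=
    Matrix.of (fun i j => ω (Fin.castLE (by omega) i) (xs j)) with hA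
  set B : Matrix (Fin k) (Fin (n - k + 1)) ℝ :=
    Matrix.of (fun i j => ω (Fin.castLE (by omega) i) (y j)) with hB
  set C : Matrix (Fin (n - k + 1)) (Fin k) ℝ :=
    Matrix.of (fun i j => g i (xs j)) with hC
  set D : Matrix (Fin (n - k + 1)) (Fin (n - k + 1)) ℝ :=
    Matrix.of (fun i j => g i (y j)) with hD
  set P : Matrix (Fin (n - k + 1)) (Fin (n - k + 1)) ℝ := Matrix.of (fun i j =>
    (Matrix.fromBlocks A (Matrix.of fun r (_ : Fin 1) => B r j)
      (Matrix.of fun (_ : Fin 1) c => C i c)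
      (Matrix.of fun (_ : Fin 1) (_ : Fin 1) => D i j)).det) with hP
  -- snoc helpers
  have hsnoc : ∀ p : Fin (n + 1), ∀ h : (p : ℕ) < n, (Fin.snoc ω f : Fin (n+1) → ℝ → ℝ) p = ω ⟨(p : ℕ), h⟩ := by
    intro p h
    simp only [Fin.snoc, h, dif_pos]
    rfl
  have hsnocl : ∀ p : Fin (n + 1), (p : ℕ) = n → (Fin.snoc ω f : Fin (n+1) → ℝ → ℝ) p = f := by
    intro p h
    simp only [Fin.snoc, show ¬((p : ℕ) < n) by omega, dif_neg, not_false_iff]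
    rfl
  have hxsnoc : ∀ (a : ℝ) (p : Fin (k + 1)) (h : (p : ℕ) < k), (Fin.snoc xs a : Fin (k+1) → ℝ) p = xs ⟨(p : ℕ), h⟩ := by
    intro a p h
    simp only [Fin.snoc, h, dif_pos]
    rfl
  have hxsnocl : ∀ (a : ℝ) (p : Fin (k + 1)), (p : ℕ) = k → (Fin.snoc xs a : Fin (k+1) → ℝ) p = a := by
    intro a p h
    simp only [Fin.snoc, show ¬((p : ℕ) < k) by omega, dif_neg, not_false_iff]
    rfl
  -- Fact: big Phi as block determinant
  have hM : Phi (Fin.snoc ω f) x = (Matrix.fromBlocks A B C D).det := by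
    have h1 : Phi (Fin.snoc ω f) x
        = ((Matrix.of fun i j => (Fin.snoc ω f : Fin (n+1) → ℝ → ℝ) i (x j)).submatrix
            (finCongr hkm.symm) (finCongr hkm.symm)).det :=
      (Matrix.det_submatrix_equiv_self _ _).symm
    rw [h1, det_fin_add k (n - k + 1)]
    congr 1
    ext i j
    rcases i with i | i <;> rcases j with j | j <;>
      simp only [Matrix.fromBlocks_apply₁₁, Matrix.fromBlocks_apply₁₂,
        Matrix.fromBlocks_apply₂₁, Matrix.fromBlocks_apply₂₂,
        Matrix.of_apply, Matrix.submatrix_apply]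
    · rw [hsnoc _ (by simp only [Fin.coe_castAdd, Fin.coe_natAdd, finCongr_apply, Fin.coe_cast]; omega)]; rfl
    · rw [hsnoc _ (by simp only [Fin.coe_castAdd, Fin.coe_natAdd, finCongr_apply, Fin.coe_cast]; omega)]; rfl
    · by_cases hi : (i : ℕ) < n - k
      · rw [hsnoc _ (by simp only [Fin.coe_castAdd, Fin.coe_natAdd, finCongr_apply, Fin.coe_cast]; omega), hC]
        simp only [Matrix.of_apply, hg]
        rw [dif_pos hi]
        rfl
      · rw [hsnocl _ (by simp only [Fin.coe_castAdd, Fin.coe_natAdd, finCongr_apply, Fin.coe_cast]; omega), hC]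
        simp only [Matrix.of_apply, hg]
        rw [dif_neg hi]
        rfl
    · by_cases hi : (i : ℕ) < n - k
      · rw [hsnoc _ (by simp only [Fin.coe_castAdd, Fin.coe_natAdd, finCongr_apply, Fin.coe_cast]; omega), hD]
        simp only [Matrix.of_apply, hg]
        rw [dif_pos hi]
        rfl
      · rw [hsnocl _ (by simp only [Fin.coe_castAdd, Fin.coe_natAdd, finCongr_apply, Fin.coe_cast]; omega), hD]
        simp only [Matrix.of_apply, hg]
        rw [dif_neg hi]
        rfl
  -- Fact: numerators as bordered determinants
  have hN : ∀ (i j : Fin (n - k + 1)),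
      Phi (fun t : Fin (k + 1) => if (t : ℕ) + 1 = k + 1 then g i else ω (Fin.castLE hk t))
        (Fin.snoc xs (y j)) = P i j := by
    intro i j
    show (Matrix.of fun r c : Fin (k + 1) =>
        (if (r : ℕ) + 1 = k + 1 then g i else ω (Fin.castLE hk r))
          ((Fin.snoc xs (y j) : Fin (k+1) → ℝ) c)).det = P i j
    rw [det_fin_add k 1, hP]
    simp only [Matrix.of_apply]
    congr 1
    ext r c
    rcases r with r | r <;> rcases c with c | c <;>
      simp only [Matrix.fromBlocks_apply₁₁, Matrix.fromBlocks_apply₁₂,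
        Matrix.fromBlocks_apply₂₁, Matrix.fromBlocks_apply₂₂,
        Matrix.of_apply]
    · rw [if_neg (by simp only [Fin.coe_castAdd, Fin.coe_natAdd, finCongr_apply, Fin.coe_cast]; omega), hxsnoc _ _ (by simp only [Fin.coe_castAdd, Fin.coe_natAdd, finCongr_apply, Fin.coe_cast]; omega)]; rfl
    · rw [if_neg (by simp only [Fin.coe_castAdd, Fin.coe_natAdd, finCongr_apply, Fin.coe_cast]; omega), hxsnocl _ _ (by simp only [Fin.coe_castAdd, Fin.coe_natAdd, finCongr_apply, Fin.coe_cast]; omega)]; rfl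
    · rw [if_pos (by simp only [Fin.coe_castAdd, Fin.coe_natAdd, finCongr_apply, Fin.coe_cast]; omega), hxsnoc _ _ (by simp only [Fin.coe_castAdd, Fin.coe_natAdd, finCongr_apply, Fin.coe_cast]; omega)]; rfl
    · rw [if_pos (by simp only [Fin.coe_castAdd, Fin.coe_natAdd, finCongr_apply, Fin.coe_cast]; omega), hxsnocl _ _ (by simp only [Fin.coe_castAdd, Fin.coe_natAdd, finCongr_apply, Fin.coe_cast]; omega)]; rfl
  -- A ≠ 0
  have hxsinj : Function.Injective xs := by
    intro a b hab
    rw [hxs] at hab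
    exact Fin.castLE_injective _ (hinj hab)
  have hAd : A.det ≠ 0 := by
    have h := phi_ne_zero hωk xs (fun i => by rw [hxs]; exact hxH _) hxsinj
    exact h
  -- Sylvester
  have hsyl := sylvester A B C D hAd
  have hPdet : P.det = A.det ^ (n - k) * (Matrix.fromBlocks A B C D).det := by
    have h2 : A.det * P.det = A.det * (A.det ^ (n - k) * (Matrix.fromBlocks A B C D).det) := by
      rw [hP, hsyl, pow_succ]
      ring
    exact mul_left_cancel₀ hAd h2
  -- rewrite RHS entries
  have hRHS : (Matrix.of fun i j : Fin (n - k + 1) =>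
        if h : (i : ℕ) < n - k then
          divDiff (fun t : Fin (k + 1) => ω (Fin.castLE hk t))
            (ω ⟨k + (i : ℕ), by omega⟩) (Fin.snoc xs (y j))
        else
          divDiff (fun t : Fin (k + 1) => ω (Fin.castLE hk t)) f (Fin.snoc xs (y j)))
      = Matrix.of (fun i j =>
          (Phi (fun t : Fin (k + 1) => ω (Fin.castLE hk t)) (Fin.snoc xs (y j)))⁻¹ * P i j) := by
    ext i j
    simp only [Matrix.of_apply]
    by_cases hi : (i : ℕ) < n - k
    · rw [dif_pos hi]
      have hgi : (ω ⟨k + (i : ℕ), by omega⟩) = g i := by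
        simp only [hg]; rw [dif_pos hi]
      rw [divDiff, hgi, hN i j, div_eq_mul_inv, mul_comm]
    · rw [dif_neg hi]
      have hgi : f = g i := by
        simp only [hg]; rw [dif_neg hi]
      rw [divDiff, hgi, hN i j, div_eq_mul_inv, mul_comm]
  rw [hRHS, hM]
  have hPhiK : (Phi (fun i : Fin k => ω (Fin.castLE (by omega) i)) xs) = A.det := rfl
  rw [hPhiK]
  have hdet2 : (Matrix.of fun i j : Fin (n - k + 1) =>
      (Phi (fun t : Fin (k + 1) => ω (Fin.castLE hk t)) (Fin.snoc xs (y j)))⁻¹ * P i j).det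
      = (∏ j : Fin (n - k + 1),
          (Phi (fun t : Fin (k + 1) => ω (Fin.castLE hk t)) (Fin.snoc xs (y j)))⁻¹) * P.det :=
    Matrix.det_mul_row _ _
  rw [hdet2, hPdet, Finset.prod_inv_distrib, div_eq_mul_inv]
  ring
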